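/- Let Δ = (𝔡₁,…,𝔡_d) be a system of delta operators on ℝ[x₁,…,x_d] with basic sequence (p_n)_{n∈ℕ^d}. Fix n ∈ ℕ^d and, for each k ≤ n, a shift-invariant linear operator L_k on ℝ[x₁,…,x_d] with L_k(1) ≠ 0. Then for every family of real numbers (b_k)_{k≤n} there exists a unique polynomial q ∈ Π_n(Δ) such that (L_k 𝔡^k q)(0) = b_k for all k ≤ n. -/

import Mathlib

open MvPolynomial

noncomputable section

/-- The algebra of real polynomials in `d` variables `x₁, …, x_d`. -/
abbrev MvP (d : ℕ) := MvPolynomial (Fin d) ℝ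

/-- The shift operator `E_v : p(x) ↦ p(x + v)`. -/
def shiftOp {d : ℕ} (v : Fin d → ℝ) : Module.End ℝ (MvP d) :=
  (MvPolynomial.aeval (fun i => X i + C (v i)) : MvP d →ₐ[ℝ] MvP d).toLinearMap

/-- A linear operator on `ℝ[x₁,…,x_d]` is shift-invariant if it commutes with
every shift operator. -/
def ShiftInv {d : ℕ} (L : Module.End ℝ (MvP d)) : Prop :=
  ∀ v : Fin d → ℝ, L * shiftOp v = shiftOp v * L

/-- `(𝔡₁, …, 𝔡_d)` is a system of delta operators: each `𝔡_i` is shift-invariant,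
each `𝔡_i` maps every homogeneous linear polynomial to a constant, and for a
nonzero homogeneous linear polynomial at least one `𝔡_i p` is nonzero. -/
def IsDeltaSystem {d : ℕ} (D : Fin d → Module.End ℝ (MvP d)) : Prop :=
  (∀ i, ShiftInv (D i)) ∧
  ∀ a : Fin d → ℝ,
    (∀ i, ∃ c : ℝ, D i (∑ j, C (a j) * X j) = C c) ∧
    ((∑ j, C (a j) * X j) ≠ 0 → ∃ i, D i (∑ j, C (a j) * X j) ≠ 0)


/-- `𝔡^k = 𝔡₁^{k₁} ∘ ⋯ ∘ 𝔡_d^{k_d}`. -/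
def dpow {d : ℕ} (D : Fin d → Module.End ℝ (MvP d)) (k : Fin d → ℕ) :
    Module.End ℝ (MvP d) :=
  (List.ofFn fun i => (D i) ^ (k i)).prod

/-- `(p_n)_{n ∈ ℕ^d}` is a basic sequence of the system `D`:
`deg p_n = |n|`, `p_0 = 1`, `p_n(0) = 0` for `|n| ≥ 1`, and
`𝔡_i p_n = n_i • p_{n - e_i}`. -/
def IsBasicSeq {d : ℕ} (D : Fin d → Module.End ℝ (MvP d))
    (p : (Fin d → ℕ) → MvP d) : Prop :=
  (∀ n : Fin d → ℕ, (p n).totalDegree = ∑ i, n i) ∧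
  p 0 = 1 ∧
  (∀ n : Fin d → ℕ, 1 ≤ ∑ i, n i → eval (0 : Fin d → ℝ) (p n) = 0) ∧
  ∀ (n : Fin d → ℕ) (i : Fin d), D i (p n) = (n i : ℝ) • p (n - Pi.single i 1)

/-- `Π_n(Δ)`: the span of the basic polynomials `p_k` with `k ≤ n`
(componentwise order). -/
def Pin {d : ℕ} (p : (Fin d → ℕ) → MvP d) (n : Fin d → ℕ) : Submodule ℝ (MvP d) :=
  Submodule.span ℝ (p '' {k | k ≤ n})

/-- `n! = n₁! ⋯ n_d!` as a real number. -/
def natFact {d : ℕ} (n : Fin d → ℕ) : ℝ := ∏ i, (Nat.factorial (n i) : ℝ)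

/-- `t` is the delta Gončarov polynomial `t_n(·;Z)` for the system `D` with
basic sequence `p` and grid `Z`: `t ∈ Π_n(Δ)` and
`(𝔡^k t)(z_k) = n!·δ_{k,n}` for all `k ≤ n`. -/
def IsGoncarov {d : ℕ} (D : Fin d → Module.End ℝ (MvP d))
    (p : (Fin d → ℕ) → MvP d) (Z : (Fin d → ℕ) → (Fin d → ℝ))
    (n : Fin d → ℕ) (t : MvP d) : Prop :=
  t ∈ Pin p n ∧
  ∀ k ≤ n, eval (Z k) (dpow D k t) = if k = n then natFact n else 0

section MyAux

lemma my_aeval_eq_eval {d : ℕ} (x : Fin d → ℝ) (q : MvP d) : aeval x q = eval x q := by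
  rw [aeval_def, eval, ← coe_eval₂Hom]; rfl

lemma my_eval_aeval {d : ℕ} (g : Fin d → MvP d) (q : MvP d) (z : Fin d → ℝ) :
    eval z (aeval g q) = eval (fun i => eval z (g i)) q := by
  have h := aeval_bind₁ (R := ℝ) z g q
  rw [my_aeval_eq_eval] at h
  rw [show (aeval g : MvP d →ₐ[ℝ] MvP d) q = bind₁ g q from rfl, h, ← my_aeval_eq_eval]
  congr 1

lemma my_shiftInv_const_eval {d : ℕ} {L : Module.End ℝ (MvP d)} (hL : ShiftInv L)
    (hne : L 1 ≠ 0) : eval (0 : Fin d → ℝ) (L 1) ≠ 0 := by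
  have hconst : ∀ w : Fin d → ℝ, eval w (L 1) = eval (0 : Fin d → ℝ) (L 1) := by
    intro w
    have h1 : shiftOp w (1 : MvP d) = 1 := by
      simp [shiftOp]
    have h2 : L (shiftOp w 1) = shiftOp w (L 1) := by
      calc L (shiftOp w 1) = (L * shiftOp w) 1 := rfl
        _ = (shiftOp w * L) 1 := by rw [hL w]
        _ = shiftOp w (L 1) := rfl
    rw [h1] at h2
    have h3 := congrArg (eval (0 : Fin d → ℝ)) h2
    rw [show (shiftOp w) (L 1) = aeval (fun i => X i + C (w i)) (L 1) from rfl,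
        my_eval_aeval] at h3
    have h4 : (fun i => eval (0 : Fin d → ℝ) (X i + C (w i))) = w := by
      funext i; simp
    rw [h4] at h3
    exact h3.symm
  intro h0
  apply hne
  apply MvPolynomial.funext
  intro x
  rw [hconst x, h0, map_zero]

lemma my_pow_apply_basic {d : ℕ} {D : Fin d → Module.End ℝ (MvP d)}
    {p : (Fin d → ℕ) → MvP d} (hp : IsBasicSeq D p) (i : Fin d) :
    ∀ (j : ℕ) (m : Fin d → ℕ),
      ((D i) ^ j) (p m) = (((m i).descFactorial j : ℕ) : ℝ) • p (m - Pi.single i j) := by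
  intro j
  induction j with
  | zero => intro m; simp
  | succ j ih =>
    intro m
    rw [pow_succ, Module.End.mul_apply, hp.2.2.2 m i, map_smul, ih]
    have h1 : (m - Pi.single i 1 : Fin d → ℕ) i = m i - 1 := by
      simp [Pi.sub_apply]
    have h2 : m - Pi.single i 1 - Pi.single i j = m - Pi.single i (j + 1) := by
      funext l
      by_cases hl : l = i
      · subst hl
        simp only [Pi.sub_apply, Pi.single_eq_same]
        omega
      · simp [Pi.sub_apply, Pi.single_eq_of_ne hl]
    rw [h1, h2, smul_smul]
    congr 1
    have hnat : m i * (m i - 1).descFactorial j = (m i).descFactorial (j + 1) := by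
      rcases Nat.eq_zero_or_pos (m i) with h | h
      · simp [h]
      · rcases Nat.exists_eq_succ_of_ne_zero h.ne' with ⟨t, ht⟩
        rw [ht, Nat.succ_descFactorial_succ, Nat.succ_sub_one]
    exact_mod_cast hnat

lemma my_list_prod_apply_basic {d : ℕ} {D : Fin d → Module.End ℝ (MvP d)}
    {p : (Fin d → ℕ) → MvP d} (hp : IsBasicSeq D p) (k : Fin d → ℕ) :
    ∀ (l : List (Fin d)), l.Nodup → ∀ m : Fin d → ℕ,
      ((l.map fun i => (D i) ^ (k i)).prod) (p m)
        = ((∏ i ∈ l.toFinset, (m i).descFactorial (k i) : ℕ) : ℝ) •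
            p (m - ∑ i ∈ l.toFinset, Pi.single i (k i)) := by
  intro l
  induction l with
  | nil => intro _ m; simp
  | cons i l ih =>
    intro hnd m
    have hi : i ∉ l := (List.nodup_cons.mp hnd).1
    have hnd' : l.Nodup := (List.nodup_cons.mp hnd).2
    have hi' : i ∉ l.toFinset := by simpa using hi
    rw [List.map_cons, List.prod_cons, Module.End.mul_apply, ih hnd' m, map_smul,
        my_pow_apply_basic hp]
    have hsi : (∑ j ∈ l.toFinset, Pi.single j (k j)) i = 0 := by
      rw [Finset.sum_apply]
      exact Finset.sum_eq_zero fun j hj =>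
        Pi.single_eq_of_ne (fun h => hi' (by rw [h]; exact hj)) _
    have h1 : (m - ∑ j ∈ l.toFinset, Pi.single j (k j)) i = m i := by
      simp [Pi.sub_apply, hsi]
    rw [h1, List.toFinset_cons, Finset.prod_insert hi', Finset.sum_insert hi', smul_smul]
    congr 1
    · push_cast; ring
    · rw [tsub_tsub, add_comm]

lemma my_dpow_apply_basic {d : ℕ} {D : Fin d → Module.End ℝ (MvP d)}
    {p : (Fin d → ℕ) → MvP d} (hp : IsBasicSeq D p) (k m : Fin d → ℕ) :
    dpow D k (p m) = ((∏ i, (m i).descFactorial (k i) : ℕ) : ℝ) • p (m - k) := by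
  rw [dpow, List.ofFn_eq_map, my_list_prod_apply_basic hp k _ (List.nodup_finRange d) m,
      List.toFinset_finRange, Finset.univ_sum_single]

lemma my_dpow_self {d : ℕ} {D : Fin d → Module.End ℝ (MvP d)}
    {p : (Fin d → ℕ) → MvP d} (hp : IsBasicSeq D p) (k : Fin d → ℕ) :
    dpow D k (p k) = ((∏ i, (k i).factorial : ℕ) : ℝ) • 1 := by
  rw [my_dpow_apply_basic hp k k, tsub_self, hp.2.1]
  simp [Nat.descFactorial_self]

lemma my_dpow_eq_zero {d : ℕ} {D : Fin d → Module.End ℝ (MvP d)}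
    {p : (Fin d → ℕ) → MvP d} (hp : IsBasicSeq D p) {k m : Fin d → ℕ}
    (h : ¬ k ≤ m) : dpow D k (p m) = 0 := by
  rw [my_dpow_apply_basic hp k m]
  obtain ⟨i, hi⟩ : ∃ i, m i < k i := by
    by_contra hc
    push_neg at hc
    exact h fun i => hc i
  rw [Finset.prod_eq_zero (Finset.mem_univ i)
    ((Nat.descFactorial_eq_zero_iff_lt).mpr hi)]
  simp

end MyAux

/-- for every choice of data `(b_k)_{k ≤ n}` there is a unique
`q ∈ Π_n(Δ)` with `(L_k 𝔡^k q)(0) = b_k` for all `k ≤ n`. -/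
theorem exists_unique_interpolant {d : ℕ} (hd : 1 ≤ d)
    (D : Fin d → Module.End ℝ (MvP d)) (hD : IsDeltaSystem D)
    (p : (Fin d → ℕ) → MvP d) (hp : IsBasicSeq D p)
    (n : Fin d → ℕ)
    (L : (Fin d → ℕ) → Module.End ℝ (MvP d))
    (hL : ∀ k ≤ n, ShiftInv (L k) ∧ (L k) (1 : MvP d) ≠ 0)
    (b : (Fin d → ℕ) → ℝ) :
    ∃! q : MvP d, q ∈ Pin p n ∧
      ∀ k ≤ n, eval (0 : Fin d → ℝ) ((L k) ((dpow D k) q)) = b k := by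
  classical
  set S : Finset (Fin d → ℕ) := Finset.Iic n with hS
  have hmemle : ∀ k : S, k.1 ≤ n := fun k => Finset.mem_Iic.mp k.2
  set M : Matrix S S ℝ :=
    (fun k m => eval (0 : Fin d → ℝ) ((L k.1) (dpow D k.1 (p m.1)))) with hM
  have hMdiag : ∀ k : S, M k k ≠ 0 := by
    intro k
    have hk := hmemle k
    have heq : M k k = ((∏ i, (k.1 i).factorial : ℕ) : ℝ) *
        eval (0 : Fin d → ℝ) ((L k.1) 1) := by
      rw [hM]
      show eval (0 : Fin d → ℝ) ((L k.1) (dpow D k.1 (p k.1))) = _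
      rw [my_dpow_self hp, map_smul, smul_eval]
    rw [heq]
    refine mul_ne_zero ?_ (my_shiftInv_const_eval (hL k.1 hk).1 (hL k.1 hk).2)
    exact_mod_cast Finset.prod_ne_zero_iff.mpr fun i _ => (Nat.factorial_pos _).ne'
  have hMoff : ∀ k m : S, ¬ k.1 ≤ m.1 → M k m = 0 := by
    intro k m h
    rw [hM]
    show eval (0 : Fin d → ℝ) ((L k.1) (dpow D k.1 (p m.1))) = 0
    rw [my_dpow_eq_zero hp h, map_zero, map_zero]
  have hker : ∀ c : S → ℝ, M.mulVec c = 0 → c = 0 := by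
    intro c hc
    by_contra hc0
    have hne : (Finset.univ.filter fun m : S => c m ≠ 0).Nonempty := by
      obtain ⟨m, hm⟩ := Function.ne_iff.mp hc0
      exact ⟨m, Finset.mem_filter.mpr ⟨Finset.mem_univ _, hm⟩⟩
    obtain ⟨m, hmmem, hmax'⟩ := Finset.exists_maximal hne
    have hmax : ∀ j, j ∈ (Finset.univ.filter fun m : S => c m ≠ 0) → ¬ m < j :=
      fun j hj hlt => not_le_of_gt hlt (hmax' hj hlt.le)
    have hm : c m ≠ 0 := (Finset.mem_filter.mp hmmem).2
    have h0 : M.mulVec c m = 0 := congrFun hc m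
    rw [Matrix.mulVec, dotProduct] at h0
    have hsum : ∑ j, M m j * c j = M m m * c m := by
      refine Finset.sum_eq_single m ?_ ?_
      · intro j _ hj
        by_cases hle : m.1 ≤ j.1
        · have hmj : m < j := by
            have : m.1 < j.1 := lt_of_le_of_ne hle fun h => hj (Subtype.ext h.symm)
            exact Subtype.coe_lt_coe.mp this
          have hcj : c j = 0 := by
            by_contra hcj
            exact hmax j (Finset.mem_filter.mpr ⟨Finset.mem_univ _, hcj⟩) hmj
          rw [hcj, mul_zero]
        · rw [hMoff m j hle, zero_mul]
      · intro h; exact absurd (Finset.mem_univ m) h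
    rw [hsum] at h0
    exact hm ((mul_eq_zero.mp h0).resolve_left (hMdiag m))
  have hinj : Function.Injective M.mulVecLin := by
    rw [← LinearMap.ker_eq_bot, LinearMap.ker_eq_bot']
    intro c hc
    exact hker c (by rwa [Matrix.mulVecLin_apply] at hc)
  have hbij : Function.Bijective M.mulVecLin :=
    ⟨hinj, LinearMap.injective_iff_surjective.mp hinj⟩
  have hval : ∀ (k : S) (c : S → ℝ),
      eval (0 : Fin d → ℝ) ((L k.1) (dpow D k.1 (∑ m : S, c m • p m.1)))
        = M.mulVec c k := by
    intro k c
    rw [map_sum, map_sum, map_sum, Matrix.mulVec, dotProduct]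
    refine Finset.sum_congr rfl fun m _ => ?_
    rw [map_smul, map_smul, smul_eval, hM, mul_comm]
  obtain ⟨c, hc⟩ := hbij.2 (fun k : S => b k.1)
  rw [Matrix.mulVecLin_apply] at hc
  refine ⟨∑ m : S, c m • p m.1, ⟨?_, ?_⟩, ?_⟩
  · exact Submodule.sum_mem _ fun m _ => Submodule.smul_mem _ _
      (Submodule.subset_span ⟨m.1, hmemle m, rfl⟩)
  · intro k hk
    have h := hval ⟨k, Finset.mem_Iic.mpr hk⟩ c
    rw [hc] at h
    exact h
  · rintro q' ⟨hmem', hval'⟩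
    have hrange : p '' {k | k ≤ n} = Set.range (fun m : S => p m.1) := by
      ext x
      constructor
      · rintro ⟨k, hk, rfl⟩; exact ⟨⟨k, Finset.mem_Iic.mpr hk⟩, rfl⟩
      · rintro ⟨m, rfl⟩; exact ⟨m.1, hmemle m, rfl⟩
    rw [Pin, hrange] at hmem'
    obtain ⟨c', hc'⟩ := (Submodule.mem_span_range_iff_exists_fun ℝ).mp hmem'
    have hvc' : M.mulVec c' = fun k : S => b k.1 := by
      funext k
      calc M.mulVec c' k
          = eval (0 : Fin d → ℝ) ((L k.1) (dpow D k.1 (∑ m : S, c' m • p m.1))) :=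
            (hval k c').symm
        _ = eval (0 : Fin d → ℝ) ((L k.1) (dpow D k.1 q')) := by rw [hc']
        _ = b k.1 := hval' k.1 (hmemle k)
    have hcc : c' = c := hinj (by
      rw [Matrix.mulVecLin_apply, Matrix.mulVecLin_apply, hvc', hc])
    rw [← hc', hcc]

end
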